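/- Let m ≥ 1, let D_1,…,D_m ≥ 1 be integers with n = D_1+…+D_m, and let a ≥ 1 be an integer. The number of words f : {1,…,n} → {1,…,a} such that v(f) = w* (the reversed pattern) equals Σ over integer sequences 0 = k_0 < k_1 < … < k_{m-1} < a of (a - k_{m-1})^{D_m} · ∏_{j=1}^{m-1} ((k_j - k_{j-1})^{D_j} - (k_j - k_{j-1} - 1)^{D_j}). Consequently, the separation distance after an a-shuffle of the sorted deck equals 1 - (n!/(D_1!⋯D_m!))·a^{-n} times this sum. -/

import Mathlib

/-- Bayer–Diaconis encoding: for a shuffle word `f : Fin n → Fin a`, the card at final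
position `i` originally occupied 1-based position `pos f i`. -/
def pos {n a : ℕ} (f : Fin n → Fin a) (i : Fin n) : ℕ :=
  (Finset.univ.filter fun j => f j < f i).card +
    (Finset.univ.filter fun j => j ≤ i ∧ f j = f i).card

/-- Partial sums of the pile sizes `D 0, D 1, …` (0-indexed: `D t` is the paper's `D_{t+1}`). -/
def dPrefix (D : ℕ → ℕ) (t : ℕ) : ℕ := ∑ s ∈ Finset.range t, D s

/-- The (0-based) label carried by 0-based original position `q` in the sorted deck. -/
def labelOf (D : ℕ → ℕ) (m q : ℕ) : ℕ :=
  ((Finset.range m).filter fun t => dPrefix D (t + 1) ≤ q).card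

/-- The label pattern `v(f)` produced by the shuffle word `f` from the sorted deck. -/
def vpat (D : ℕ → ℕ) (m : ℕ) {n a : ℕ} (f : Fin n → Fin a) : Fin n → ℕ :=
  fun i => labelOf D m (pos f i - 1)

/-- Extension of a tuple `k : Fin m → Fin a` to a sequence `ℕ → ℕ` (zero beyond `m`). -/
def extSeq {m a : ℕ} (k : Fin m → Fin a) : ℕ → ℕ :=
  fun j => if h : j < m then (k ⟨j, h⟩ : ℕ) else 0

/-- The summand `(a - k_{m-1})^{D_m} ∏_{j=1}^{m-1} ((k_j - k_{j-1})^{D_j} - (k_j - k_{j-1} - 1)^{D_j})`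
for a sequence `0 = k_0 < k_1 < ⋯ < k_{m-1} < a` (here 0-indexed: `D j` is the paper's `D_{j+1}`). -/
def seqTerm (D : ℕ → ℕ) (m a : ℕ) (k : ℕ → ℕ) : ℕ :=
  (a - k (m - 1)) ^ (D (m - 1)) *
    ∏ j ∈ Finset.range (m - 1), ((k (j + 1) - k j) ^ (D j) - (k (j + 1) - k j - 1) ^ (D j))

open Finset

/-! ### generic interval-filter cardinality -/

lemma card_filter_val_Ico (N lo hi : ℕ) (h : hi ≤ N) :
    (Finset.univ.filter fun c : Fin N => lo ≤ (c : ℕ) ∧ (c : ℕ) < hi).card = hi - lo := by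
  rw [← Nat.card_Ico lo hi, ← Finset.card_image_of_injective _ Fin.val_injective]
  congr 1
  ext q
  simp only [Finset.mem_image, Finset.mem_filter, Finset.mem_univ, true_and, Finset.mem_Ico]
  constructor
  · rintro ⟨c, hc, rfl⟩; exact hc
  · rintro ⟨h1, h2⟩; exact ⟨⟨q, lt_of_lt_of_le h2 h⟩, ⟨h1, h2⟩, rfl⟩

/-! ### dPrefix and labelOf -/

lemma dPrefix_succ (D : ℕ → ℕ) (t : ℕ) : dPrefix D (t + 1) = dPrefix D t + D t :=
  Finset.sum_range_succ D t

lemma dPrefix_mono (D : ℕ → ℕ) : Monotone (dPrefix D) := fun _ _ h =>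
  Finset.sum_le_sum_of_subset (Finset.range_subset_range.2 h)

lemma le_labelOf (D : ℕ → ℕ) (m q t : ℕ) (ht : t ≤ m) (h : dPrefix D t ≤ q) :
    t ≤ labelOf D m q := by
  have hsub : Finset.range t ⊆ (Finset.range m).filter fun s => dPrefix D (s + 1) ≤ q := by
    intro s hs
    simp only [Finset.mem_range, Finset.mem_filter] at *
    exact ⟨lt_of_lt_of_le hs ht, le_trans (dPrefix_mono D hs) h⟩
  simpa [labelOf] using Finset.card_le_card hsub

lemma labelOf_le (D : ℕ → ℕ) (m q t : ℕ) (h : q < dPrefix D (t + 1)) :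
    labelOf D m q ≤ t := by
  have hsub : ((Finset.range m).filter fun s => dPrefix D (s + 1) ≤ q) ⊆ Finset.range t := by
    intro s hs
    simp only [Finset.mem_range, Finset.mem_filter] at *
    by_contra hc
    exact absurd (le_trans (dPrefix_mono D (by omega : t + 1 ≤ s + 1)) hs.2) (by omega)
  simpa [labelOf] using Finset.card_le_card hsub

lemma labelOf_mono (D : ℕ → ℕ) (m : ℕ) {q q' : ℕ} (h : q ≤ q') :
    labelOf D m q ≤ labelOf D m q' := by
  apply Finset.card_le_card
  intro s hs
  simp only [Finset.mem_filter] at *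
  exact ⟨hs.1, le_trans hs.2 h⟩

lemma labelOf_eq (D : ℕ → ℕ) (m q t : ℕ) (htm : t < m) (h1 : dPrefix D t ≤ q)
    (h2 : q < dPrefix D (t + 1)) : labelOf D m q = t :=
  le_antisymm (labelOf_le D m q t h2) (le_labelOf D m q t htm.le h1)

def grp (D : ℕ → ℕ) (m n : ℕ) (i : Fin n) : ℕ := labelOf D m (n - 1 - (i : ℕ))

section grpLemmas

variable {m n : ℕ} {D : ℕ → ℕ} (hm : 1 ≤ m) (hD : ∀ t < m, 1 ≤ D t)
  (hn : n = dPrefix D m)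

include hm hn in
lemma grp_lt (i : Fin n) : grp D m n i < m := by
  have h1 : n - 1 - (i : ℕ) < dPrefix D ((m - 1) + 1) := by
    have : (m - 1) + 1 = m := by omega
    rw [this, ← hn]
    have := i.isLt
    omega
  have := labelOf_le D m (n - 1 - (i : ℕ)) (m - 1) h1
  unfold grp
  omega

include hm hD hn in
lemma grp_eq_iff {j : ℕ} (hj : j < m) (i : Fin n) :
    grp D m n i = j ↔ n - dPrefix D (j + 1) ≤ (i : ℕ) ∧ (i : ℕ) < n - dPrefix D j := by
  have hP1 : dPrefix D (j + 1) = dPrefix D j + D j := dPrefix_succ D j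
  have hPn : dPrefix D (j + 1) ≤ n := hn ▸ dPrefix_mono D (by omega)
  have hDj : 1 ≤ D j := hD j hj
  have hi : (i : ℕ) < n := i.isLt
  constructor
  · intro h
    have b1 : dPrefix D j ≤ n - 1 - (i : ℕ) := by
      rcases Nat.eq_zero_or_pos j with h0 | h0
      · simp [h0, dPrefix]
      · by_contra hc
        have := labelOf_le D m (n - 1 - (i : ℕ)) (j - 1)
          (by rw [(by omega : j - 1 + 1 = j)]; omega)
        unfold grp at h; omega
    have b2 : n - 1 - (i : ℕ) < dPrefix D (j + 1) := by
      by_contra hc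
      have := le_labelOf D m (n - 1 - (i : ℕ)) (j + 1) (by omega) (by omega)
      unfold grp at h; omega
    omega
  · intro ⟨b1, b2⟩
    exact labelOf_eq D m _ j hj (by omega) (by omega)

include hm hn in
lemma card_grp_lt {t : ℕ} (ht : t ≤ m) :
    (Finset.univ.filter fun i : Fin n => grp D m n i < t).card = dPrefix D t := by
  have hPt : dPrefix D t ≤ n := hn ▸ dPrefix_mono D ht
  have heq : (Finset.univ.filter fun i : Fin n => grp D m n i < t) =
      (Finset.univ.filter fun i : Fin n => n - dPrefix D t ≤ (i : ℕ) ∧ (i : ℕ) < n) := by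
    apply Finset.filter_congr
    intro i _
    have hi : (i : ℕ) < n := i.isLt
    constructor
    · intro h
      have : n - 1 - (i : ℕ) < dPrefix D t := by
        by_contra hc
        have := le_labelOf D m (n - 1 - (i : ℕ)) t ht (by omega)
        unfold grp at h; omega
      omega
    · intro ⟨h1, _⟩
      rcases Nat.eq_zero_or_pos t with h0 | h0
      · simp [dPrefix, h0] at h1; omega
      · have := labelOf_le D m (n - 1 - (i : ℕ)) (t - 1)
          (by rw [(by omega : t - 1 + 1 = t)]; omega)
        unfold grp; omega
  rw [heq, card_filter_val_Ico n _ n le_rfl]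
  omega

include hm hD hn in
lemma card_grp_eq {j : ℕ} (hj : j < m) :
    (Finset.univ.filter fun i : Fin n => grp D m n i = j).card = D j := by
  have hP1 : dPrefix D (j + 1) = dPrefix D j + D j := dPrefix_succ D j
  have hPn : dPrefix D (j + 1) ≤ n := hn ▸ dPrefix_mono D (by omega)
  have heq : (Finset.univ.filter fun i : Fin n => grp D m n i = j) =
      (Finset.univ.filter fun i : Fin n =>
        n - dPrefix D (j + 1) ≤ (i : ℕ) ∧ (i : ℕ) < n - dPrefix D j) := by
    apply Finset.filter_congr
    intro i _
    exact grp_eq_iff hm hD hn hj i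
  rw [heq, card_filter_val_Ico n _ _ (by omega)]
  omega

lemma grp_antitone {i i' : Fin n} (h : i ≤ i') : grp D m n i' ≤ grp D m n i :=
  labelOf_mono D m (by have := i.isLt; have := i'.isLt; omega)

end grpLemmas

def lexLt {n a : ℕ} (f : Fin n → Fin a) (j i : Fin n) : Prop :=
  f j < f i ∨ (f j = f i ∧ j < i)

instance {n a : ℕ} (f : Fin n → Fin a) (i : Fin n) :
    DecidablePred (fun j => lexLt f j i) := fun j => by unfold lexLt; infer_instance

lemma lexLt_irrefl {n a : ℕ} (f : Fin n → Fin a) (i : Fin n) : ¬ lexLt f i i := by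
  rintro (h | ⟨-, h⟩) <;> exact lt_irrefl _ h

lemma lexLt_trans {n a : ℕ} {f : Fin n → Fin a} {j i i' : Fin n}
    (h1 : lexLt f j i) (h2 : lexLt f i i') : lexLt f j i' := by
  rcases h1 with h1 | ⟨e1, l1⟩ <;> rcases h2 with h2 | ⟨e2, l2⟩
  · exact Or.inl (lt_trans h1 h2)
  · exact Or.inl (e2 ▸ h1)
  · exact Or.inl (e1 ▸ h2)
  · exact Or.inr ⟨e1.trans e2, lt_trans l1 l2⟩

lemma lexLt_total {n a : ℕ} (f : Fin n → Fin a) {j i : Fin n} (h : j ≠ i) :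
    lexLt f j i ∨ lexLt f i j := by
  rcases lt_trichotomy (f j) (f i) with h1 | h1 | h1
  · exact Or.inl (Or.inl h1)
  · rcases lt_or_gt_of_ne h with h2 | h2
    · exact Or.inl (Or.inr ⟨h1, h2⟩)
    · exact Or.inr (Or.inr ⟨h1.symm, h2⟩)
  · exact Or.inr (Or.inl h1)

lemma pos_eq_card_lexLt {n a : ℕ} (f : Fin n → Fin a) (i : Fin n) :
    pos f i = (Finset.univ.filter fun j => lexLt f j i).card + 1 := by
  unfold pos lexLt
  rw [Finset.filter_or, Finset.card_union_of_disjoint (by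
    rw [Finset.disjoint_left]
    intro j h1 h2
    simp only [Finset.mem_filter] at h1 h2
    exact absurd h2.2.1 (ne_of_lt h1.2))]
  have hins : (Finset.univ.filter fun j => j ≤ i ∧ f j = f i) =
      insert i (Finset.univ.filter fun j : Fin n => f j = f i ∧ j < i) := by
    ext j
    simp only [Finset.mem_filter, Finset.mem_univ, true_and, Finset.mem_insert]
    constructor
    · rintro ⟨h1, h2⟩
      rcases eq_or_lt_of_le h1 with h | h
      · exact Or.inl h
      · exact Or.inr ⟨h2, h⟩
    · rintro (rfl | ⟨h1, h2⟩)
      · exact ⟨le_rfl, rfl⟩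
      · exact ⟨h2.le, h1⟩
  rw [hins, Finset.card_insert_of_notMem (by simp)]
  omega

lemma card_lexLt_lt {n a : ℕ} {f : Fin n → Fin a} {j i : Fin n} (h : lexLt f j i) :
    (Finset.univ.filter fun j' => lexLt f j' j).card <
      (Finset.univ.filter fun j' => lexLt f j' i).card := by
  apply Finset.card_lt_card
  rw [Finset.ssubset_iff_of_subset (by
    intro j' hj'
    simp only [Finset.mem_filter, Finset.mem_univ, true_and] at *
    exact lexLt_trans hj' h)]
  refine ⟨j, ?_, ?_⟩ <;> simp only [Finset.mem_filter, Finset.mem_univ, true_and]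
  · exact h
  · exact lexLt_irrefl f j

section keyLemma

variable {m n a : ℕ} {D : ℕ → ℕ} (hm : 1 ≤ m) (hD : ∀ t < m, 1 ≤ D t)
  (hn : n = dPrefix D m)

include hm hD hn in
lemma key_iff (f : Fin n → Fin a) :
    (vpat D m f = fun i : Fin n => labelOf D m (n - 1 - (i : ℕ))) ↔
    ∀ i i' : Fin n, grp D m n i < grp D m n i' → f i < f i' := by
  have hpi : ∀ i : Fin n, vpat D m f i =
      labelOf D m ((Finset.univ.filter fun j => lexLt f j i).card) := by
    intro i
    unfold vpat
    rw [pos_eq_card_lexLt]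
    simp
  constructor
  · intro H i i' hg
    have H' := congrFun H
    have hcard : (Finset.univ.filter fun j => lexLt f j i).card <
        (Finset.univ.filter fun j => lexLt f j i').card := by
      by_contra hc
      have hmono := labelOf_mono D m (le_of_not_gt hc)
      rw [← hpi i, ← hpi i', H' i, H' i'] at hmono
      unfold grp at hg
      omega
    have hne : i ≠ i' := by
      intro h; rw [h] at hg; exact lt_irrefl _ hg
    rcases lexLt_total f hne with h | h
    · rcases h with h | ⟨he, hl⟩
      · exact h
      · have := grp_antitone (D := D) (m := m) hl.le; omega
    · exact absurd (card_lexLt_lt h) (by omega)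
  · intro H
    funext i
    rw [hpi i]
    have htm : grp D m n i < m := grp_lt hm hn i
    have : labelOf D m ((Finset.univ.filter fun j => lexLt f j i).card) = grp D m n i := by
      apply labelOf_eq D m _ _ htm
      · rw [← card_grp_lt hm hn htm.le]
        apply Finset.card_le_card
        intro j hj
        simp only [Finset.mem_filter, Finset.mem_univ, true_and] at *
        exact Or.inl (H j i hj)
      · rw [← card_grp_lt hm hn (by omega : grp D m n i + 1 ≤ m)]
        apply Finset.card_lt_card
        rw [Finset.ssubset_iff_of_subset (by
          intro j hj
          simp only [Finset.mem_filter, Finset.mem_univ, true_and] at *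
          by_contra hc
          have hfij : f i < f j := H i j (by omega)
          rcases hj with h | ⟨he, -⟩
          · exact absurd (lt_trans h hfij) (lt_irrefl _)
          · rw [he] at hfij; exact lt_irrefl _ hfij)]
        refine ⟨i, ?_, ?_⟩ <;> simp only [Finset.mem_filter, Finset.mem_univ, true_and]
        · omega
        · exact lexLt_irrefl f i
    rw [this]
    rfl

end keyLemma

lemma countAttain {n a : ℕ} (g : Fin n → ℕ) (J : Finset ℕ) :
    ∀ (T : ℕ → Finset (Fin a)) (top : ℕ → Fin a), (∀ j ∈ J, top j ∈ T j) →
    (Finset.univ.filter fun f : Fin n → Fin a =>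
        (∀ i, f i ∈ T (g i)) ∧ ∀ j ∈ J, ∃ i, g i = j ∧ f i = top j).card =
    (∏ j ∈ J, ((T j).card ^ (Finset.univ.filter fun i => g i = j).card -
        ((T j).card - 1) ^ (Finset.univ.filter fun i => g i = j).card)) *
      ∏ i ∈ Finset.univ.filter (fun i : Fin n => g i ∉ J), (T (g i)).card := by
  induction J using Finset.induction_on with
  | empty =>
    intro T top _
    simp only [Finset.notMem_empty, false_implies, implies_true, and_true,
      Finset.prod_empty, one_mul]
    have hpi : (Finset.univ.filter fun f : Fin n → Fin a => ∀ i, f i ∈ T (g i)) =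
        Fintype.piFinset (fun i => T (g i)) := by
      ext f
      simp [Fintype.mem_piFinset]
    rw [hpi, Fintype.card_piFinset]
    simp
  | @insert j J hj ih =>
    intro T top htop
    set T' : ℕ → Finset (Fin a) := Function.update T j ((T j).erase (top j)) with hT'def
    have hT'j : T' j = (T j).erase (top j) := Function.update_self _ _ _
    have hT'ne : ∀ j', j' ≠ j → T' j' = T j' := fun j' h => Function.update_of_ne h _ _
    have htopJ : ∀ j' ∈ J, top j' ∈ T j' := fun j' hj' =>
      htop j' (Finset.mem_insert_of_mem hj')
    have htopJ' : ∀ j' ∈ J, top j' ∈ T' j' := by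
      intro j' hj'
      rw [hT'ne j' (by rintro rfl; exact hj hj')]
      exact htopJ j' hj'
    -- partition of the J-constrained set by the attainment condition at j
    have hsplit :
        (Finset.univ.filter fun f : Fin n → Fin a =>
            (∀ i, f i ∈ T (g i)) ∧ ∀ j' ∈ J, ∃ i, g i = j' ∧ f i = top j').card =
        (Finset.univ.filter fun f : Fin n → Fin a =>
            (∀ i, f i ∈ T (g i)) ∧ ∀ j' ∈ insert j J, ∃ i, g i = j' ∧ f i = top j').card +
        (Finset.univ.filter fun f : Fin n → Fin a =>
            (∀ i, f i ∈ T' (g i)) ∧ ∀ j' ∈ J, ∃ i, g i = j' ∧ f i = top j').card := by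
      rw [← Finset.card_filter_add_card_filter_not
        (p := fun f : Fin n → Fin a => ∃ i, g i = j ∧ f i = top j) (s := Finset.univ.filter
          fun f : Fin n → Fin a =>
            (∀ i, f i ∈ T (g i)) ∧ ∀ j' ∈ J, ∃ i, g i = j' ∧ f i = top j')]
      congr 1
      · rw [Finset.filter_filter]
        apply congr_arg Finset.card
        apply Finset.filter_congr
        intro f _
        simp only [Finset.forall_mem_insert]
        tauto
      · rw [Finset.filter_filter]
        apply congr_arg Finset.card
        apply Finset.filter_congr
        intro f _
        constructor
        · rintro ⟨⟨hmem, hatt⟩, hnot⟩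
          refine ⟨fun i => ?_, hatt⟩
          by_cases hgi : g i = j
          · rw [hgi, hT'j, Finset.mem_erase]
            exact ⟨fun he => hnot ⟨i, hgi, he⟩, hgi ▸ hmem i⟩
          · rw [hT'ne _ hgi]
            exact hmem i
        · rintro ⟨hmem, hatt⟩
          refine ⟨⟨fun i => ?_, hatt⟩, ?_⟩
          · by_cases hgi : g i = j
            · have := hmem i
              rw [hgi, hT'j, Finset.mem_erase] at this
              exact hgi ▸ this.2
            · rw [← hT'ne _ hgi]
              exact hmem i
          · rintro ⟨i, hgi, he⟩
            have := hmem i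
            rw [hgi, hT'j, Finset.mem_erase] at this
            exact this.1 he
    rw [ih T top htopJ, ih T' top htopJ'] at hsplit
    -- split the product over i with g i ∉ J
    have hfil : (Finset.univ.filter fun i : Fin n => g i ∉ J) =
        (Finset.univ.filter fun i : Fin n => g i = j) ∪
          (Finset.univ.filter fun i : Fin n => g i ∉ insert j J) := by
      ext i
      simp only [Finset.mem_filter, Finset.mem_univ, true_and, Finset.mem_union,
        Finset.mem_insert]
      by_cases h : g i = j <;> simp [h] <;> tauto
    have hdisj : Disjoint (Finset.univ.filter fun i : Fin n => g i = j)
        (Finset.univ.filter fun i : Fin n => g i ∉ insert j J) := by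
      rw [Finset.disjoint_left]
      intro i h1 h2
      simp only [Finset.mem_filter, Finset.mem_univ, true_and, Finset.mem_insert] at h1 h2
      exact h2 (Or.inl h1)
    set d : ℕ := (Finset.univ.filter fun i : Fin n => g i = j).card with hd
    set R : ℕ := ∏ i ∈ Finset.univ.filter (fun i : Fin n => g i ∉ insert j J), (T (g i)).card
      with hR
    set A : ℕ := ∏ j' ∈ J, ((T j').card ^ (Finset.univ.filter fun i => g i = j').card -
        ((T j').card - 1) ^ (Finset.univ.filter fun i => g i = j').card) with hA
    have hprodT : ∏ i ∈ Finset.univ.filter (fun i : Fin n => g i ∉ J), (T (g i)).card =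
        (T j).card ^ d * R := by
      rw [hfil, Finset.prod_union hdisj]
      congr 1
      rw [Finset.prod_congr rfl (fun i hi => by
        simp only [Finset.mem_filter] at hi
        rw [hi.2]), Finset.prod_const]
    have hprodT' : ∏ i ∈ Finset.univ.filter (fun i : Fin n => g i ∉ J), (T' (g i)).card =
        ((T j).card - 1) ^ d * R := by
      rw [hfil, Finset.prod_union hdisj]
      congr 1
      · rw [Finset.prod_congr rfl (fun i hi => by
          simp only [Finset.mem_filter] at hi
          rw [hi.2, hT'j]), Finset.prod_const,
          Finset.card_erase_of_mem (htop j (Finset.mem_insert_self j J))]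
      · apply Finset.prod_congr rfl
        intro i hi
        simp only [Finset.mem_filter, Finset.mem_univ, true_and, Finset.mem_insert] at hi
        rw [hT'ne _ (fun h => hi (Or.inl h))]
    have hA' : (∏ j' ∈ J, ((T' j').card ^ (Finset.univ.filter fun i => g i = j').card -
        ((T' j').card - 1) ^ (Finset.univ.filter fun i => g i = j').card)) = A := by
      apply Finset.prod_congr rfl
      intro j' hj'
      rw [hT'ne j' (by rintro rfl; exact hj hj')]
    rw [hprodT, hprodT', hA'] at hsplit
    rw [Finset.prod_insert hj, ← hd, ← hA]
    -- now pure ℕ arithmetic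
    set X : ℕ := (T j).card ^ d with hX
    set Y : ℕ := ((T j).card - 1) ^ d with hY
    have hle : Y ≤ X := Nat.pow_le_pow_left (Nat.sub_le _ _) d
    have hexp : A * (X * R) = (X - Y) * A * R + A * (Y * R) := by
      have h1 : X - Y + Y = X := Nat.sub_add_cancel hle
      calc A * (X * R) = A * ((X - Y + Y) * R) := by rw [h1]
        _ = (X - Y) * A * R + A * (Y * R) := by ring
    rw [hexp] at hsplit
    exact (Nat.add_right_cancel hsplit).symm

def kNat (D : ℕ → ℕ) (m : ℕ) {n a : ℕ} (f : Fin n → Fin a) (j : ℕ) : ℕ :=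
  if j = 0 then 0 else
    ((Finset.univ.filter fun i : Fin n => grp D m n i = j - 1).sup fun i => (f i : ℕ)) + 1

def phiMap (D : ℕ → ℕ) (m : ℕ) {n a : ℕ} (ha : 0 < a) (f : Fin n → Fin a) : Fin m → Fin a :=
  fun j => ⟨kNat D m f (j : ℕ) % a, Nat.mod_lt _ ha⟩

section phiLemmas

variable {m n a : ℕ} {D : ℕ → ℕ} (hm : 1 ≤ m) (hD : ∀ t < m, 1 ≤ D t)
  (hn : n = dPrefix D m)

include hm hD hn in
lemma grp_fiber_nonempty {j : ℕ} (hj : j < m) :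
    (Finset.univ.filter fun i : Fin n => grp D m n i = j).Nonempty :=
  Finset.card_pos.mp (by rw [card_grp_eq hm hD hn hj]; exact hD j hj)

include hm hD hn in
lemma kNat_lt (ha : 0 < a) {f : Fin n → Fin a}
    (hf : ∀ i i' : Fin n, grp D m n i < grp D m n i' → f i < f i')
    {j : ℕ} (hj : j < m) : kNat D m f j < a := by
  rcases Nat.eq_zero_or_pos j with rfl | h0
  · simpa [kNat] using ha
  · obtain ⟨i', hi'⟩ := grp_fiber_nonempty hm hD hn hj
    have hgi' : grp D m n i' = j := (Finset.mem_filter.mp hi').2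
    obtain ⟨i0, hi0⟩ := grp_fiber_nonempty hm hD hn (show j - 1 < m by omega)
    have hgi0 : grp D m n i0 = j - 1 := (Finset.mem_filter.mp hi0).2
    have hless : ∀ i'' ∈ (Finset.univ.filter fun i : Fin n => grp D m n i = j - 1),
        (f i'' : ℕ) < (f i' : ℕ) := by
      intro i'' hi''
      have hg : grp D m n i'' = j - 1 := (Finset.mem_filter.mp hi'').2
      exact hf i'' i' (by rw [hg, hgi']; omega)
    have hpos : 0 < (f i' : ℕ) := lt_of_le_of_lt (Nat.zero_le _) (hless i0 hi0)
    have hsup := (Finset.sup_lt_iff hpos).mpr hless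
    unfold kNat
    rw [if_neg (by omega)]
    have := (f i').isLt
    omega

include hm hD hn in
lemma kNat_strictMono {f : Fin n → Fin a}
    (hf : ∀ i i' : Fin n, grp D m n i < grp D m n i' → f i < f i')
    {j j' : ℕ} (hjj : j < j') (hj' : j' < m) : kNat D m f j < kNat D m f j' := by
  have hj'0 : j' ≠ 0 := by omega
  obtain ⟨i1, hi1⟩ := grp_fiber_nonempty hm hD hn (show j' - 1 < m by omega)
  have hgi1 : grp D m n i1 = j' - 1 := (Finset.mem_filter.mp hi1).2
  rcases Nat.eq_zero_or_pos j with rfl | h0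
  · unfold kNat
    rw [if_pos rfl, if_neg hj'0]
    omega
  · unfold kNat
    rw [if_neg (by omega), if_neg hj'0]
    obtain ⟨i0, hi0, hsup0⟩ := Finset.exists_mem_eq_sup _
      (grp_fiber_nonempty hm hD hn (show j - 1 < m by omega)) (fun i : Fin n => (f i : ℕ))
    have hgi0 : grp D m n i0 = j - 1 := (Finset.mem_filter.mp hi0).2
    have h01 : (f i0 : ℕ) < (f i1 : ℕ) := hf i0 i1 (by rw [hgi0, hgi1]; omega)
    have hle1 : (f i1 : ℕ) ≤ (Finset.univ.filter fun i : Fin n =>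
        grp D m n i = j' - 1).sup fun i : Fin n => (f i : ℕ) :=
      Finset.le_sup (f := fun i : Fin n => ((f i : ℕ))) hi1
    omega

include hm hD hn in
lemma phi_mem (ha : 0 < a) {f : Fin n → Fin a}
    (hf : ∀ i i' : Fin n, grp D m n i < grp D m n i' → f i < f i') :
    extSeq (phiMap D m ha f) 0 = 0 ∧ StrictMono (phiMap D m ha f) := by
  constructor
  · have h0m : 0 < m := hm
    simp only [extSeq, dif_pos h0m, phiMap]
    simp [kNat]
  · intro j j' hjj
    have h1 : kNat D m f (j : ℕ) < a := kNat_lt hm hD hn ha hf j.isLt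
    have h2 : kNat D m f (j' : ℕ) < a := kNat_lt hm hD hn ha hf j'.isLt
    show (phiMap D m ha f j : Fin a) < phiMap D m ha f j'
    rw [Fin.lt_def]
    simp only [phiMap]
    rw [Nat.mod_eq_of_lt h1, Nat.mod_eq_of_lt h2]
    exact kNat_strictMono hm hD hn hf (by exact hjj) j'.isLt

include hm hD hn in
lemma fiber_iff (ha : 0 < a) (k : Fin m → Fin a)
    (hk0 : extSeq k 0 = 0) (hkm : StrictMono k) (f : Fin n → Fin a) :
    ((∀ i i' : Fin n, grp D m n i < grp D m n i' → f i < f i') ∧ phiMap D m ha f = k) ↔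
    ((∀ i : Fin n, extSeq k (grp D m n i) ≤ (f i : ℕ) ∧
        (f i : ℕ) < (if grp D m n i = m - 1 then a else extSeq k (grp D m n i + 1))) ∧
      ∀ j ∈ Finset.range (m - 1), ∃ i : Fin n, grp D m n i = j ∧
        (f i : ℕ) = extSeq k (j + 1) - 1) := by
  have hkhat_lt : ∀ j, j < m → extSeq k j < a := by
    intro j hj
    simp only [extSeq, dif_pos hj]
    exact (k ⟨j, hj⟩).isLt
  have hkhat_mono : ∀ {j j' : ℕ}, j < j' → j' < m → extSeq k j < extSeq k j' := by
    intro j j' h h'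
    simp only [extSeq, dif_pos (h.trans h'), dif_pos h']
    exact hkm (Fin.mk_lt_mk.mpr h)
  constructor
  · rintro ⟨hcond, hphi⟩
    have hkval : ∀ j, j < m → kNat D m f j = extSeq k j := by
      intro j hj
      have h1 : kNat D m f j < a := kNat_lt hm hD hn ha hcond hj
      have hv : kNat D m f j % a = (k ⟨j, hj⟩ : ℕ) :=
        congrArg Fin.val (congrFun hphi ⟨j, hj⟩)
      rw [Nat.mod_eq_of_lt h1] at hv
      simp only [extSeq, dif_pos hj]
      exact hv
    constructor
    · intro i
      have hj : grp D m n i < m := grp_lt hm hn i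
      constructor
      · rcases Nat.eq_zero_or_pos (grp D m n i) with h0 | h0
        · rw [h0, hk0]; exact Nat.zero_le _
        · rw [← hkval _ hj]
          unfold kNat
          rw [if_neg (by omega)]
          have hsup : ((Finset.univ.filter fun i' : Fin n =>
              grp D m n i' = grp D m n i - 1).sup fun i' : Fin n => (f i' : ℕ)) <
              (f i : ℕ) := by
            apply (Finset.sup_lt_iff ?_).mpr
            · intro i'' hi''
              have hg : grp D m n i'' = grp D m n i - 1 := (Finset.mem_filter.mp hi'').2
              exact hcond i'' i (by omega)
            · obtain ⟨i0, hi0⟩ := grp_fiber_nonempty hm hD hn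
                (show grp D m n i - 1 < m by omega)
              have hg0 : grp D m n i0 = grp D m n i - 1 := (Finset.mem_filter.mp hi0).2
              exact lt_of_le_of_lt (Nat.zero_le _) (hcond i0 i (by omega))
          omega
      · by_cases hml : grp D m n i = m - 1
        · rw [if_pos hml]; exact (f i).isLt
        · rw [if_neg hml]
          rw [← hkval _ (by omega)]
          unfold kNat
          rw [if_neg (by omega)]
          have hmem : i ∈ Finset.univ.filter fun i' : Fin n =>
              grp D m n i' = grp D m n i + 1 - 1 :=
            Finset.mem_filter.mpr ⟨Finset.mem_univ _, by omega⟩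
          have : (f i : ℕ) ≤ (Finset.univ.filter fun i' : Fin n =>
              grp D m n i' = grp D m n i + 1 - 1).sup fun i' : Fin n => (f i' : ℕ) :=
            Finset.le_sup (f := fun i' : Fin n => ((f i' : ℕ))) hmem
          omega
    · intro j hjr
      rw [Finset.mem_range] at hjr
      obtain ⟨i0, hi0, hsup0⟩ := Finset.exists_mem_eq_sup _
        (grp_fiber_nonempty hm hD hn (show j < m by omega)) (fun i : Fin n => (f i : ℕ))
      have hg0 : grp D m n i0 = j := (Finset.mem_filter.mp hi0).2
      refine ⟨i0, hg0, ?_⟩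
      have hkv := hkval (j + 1) (by omega)
      unfold kNat at hkv
      rw [if_neg (by omega)] at hkv
      simp only [Nat.add_sub_cancel] at hkv
      omega
  · rintro ⟨hpt, hatt⟩
    have hcond : ∀ i i' : Fin n, grp D m n i < grp D m n i' → f i < f i' := by
      intro i i' h
      have h1 : grp D m n i' < m := grp_lt hm hn i'
      have h2 : grp D m n i ≠ m - 1 := by omega
      have hui := (hpt i).2
      rw [if_neg h2] at hui
      have hmid : extSeq k (grp D m n i + 1) ≤ extSeq k (grp D m n i') := by
        rcases eq_or_lt_of_le (show grp D m n i + 1 ≤ grp D m n i' by omega) with he | hl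
        · rw [he]
        · exact (hkhat_mono hl h1).le
      have hlo := (hpt i').1
      rw [Fin.lt_def]
      omega
    refine ⟨hcond, ?_⟩
    funext j
    apply Fin.ext
    have hjm : (j : ℕ) < m := j.isLt
    have hkval : kNat D m f (j : ℕ) = extSeq k (j : ℕ) := by
      rcases Nat.eq_zero_or_pos (j : ℕ) with h0 | h0
      · rw [h0, hk0]; simp [kNat]
      · have hm2 : 2 ≤ m := by omega
        have hjr : (j : ℕ) - 1 ∈ Finset.range (m - 1) := by
          rw [Finset.mem_range]; omega
        obtain ⟨i0, hg0, hf0⟩ := hatt _ hjr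
        rw [(by omega : (j : ℕ) - 1 + 1 = (j : ℕ))] at hf0
        have hk1 : 1 ≤ extSeq k (j : ℕ) := by
          have := hkhat_mono h0 hjm
          rw [hk0] at this
          omega
        unfold kNat
        rw [if_neg (by omega)]
        have hub : ((Finset.univ.filter fun i : Fin n =>
            grp D m n i = (j : ℕ) - 1).sup fun i : Fin n => (f i : ℕ)) ≤
            extSeq k (j : ℕ) - 1 := by
          apply Finset.sup_le
          intro i'' hi''
          have hg : grp D m n i'' = (j : ℕ) - 1 := (Finset.mem_filter.mp hi'').2
          have := (hpt i'').2
          rw [if_neg (by omega), hg, (by omega : (j : ℕ) - 1 + 1 = (j : ℕ))] at this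
          omega
        have hmem0 : i0 ∈ Finset.univ.filter fun i : Fin n => grp D m n i = (j : ℕ) - 1 :=
          Finset.mem_filter.mpr ⟨Finset.mem_univ _, hg0⟩
        have hlb : (f i0 : ℕ) ≤ (Finset.univ.filter fun i : Fin n =>
            grp D m n i = (j : ℕ) - 1).sup fun i : Fin n => (f i : ℕ) :=
          Finset.le_sup (f := fun i : Fin n => ((f i : ℕ))) hmem0
        omega
    show kNat D m f (j : ℕ) % a = ((k j : ℕ))
    rw [hkval, Nat.mod_eq_of_lt (hkhat_lt _ hjm)]
    simp only [extSeq, dif_pos hjm]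

end phiLemmas


/-- The number of shuffle words producing the reversed pattern `w*` equals the sum over
integer sequences `0 = k_0 < k_1 < ⋯ < k_{m-1} < a` of the product above; consequently the
separation distance after an `a`-shuffle of the sorted deck equals
`1 - (n!/(D_1!⋯D_m!))·a^{-n}` times this sum. -/
theorem statement11 (m : ℕ) (hm : 1 ≤ m) (D : ℕ → ℕ) (hD : ∀ t < m, 1 ≤ D t)
    (a : ℕ) (ha : 1 ≤ a) (n : ℕ) (hn : n = ∑ t ∈ Finset.range m, D t)
    (SEP : ℝ)
    (hSEP : SEP = 1 - (n.factorial : ℝ) / (∏ t ∈ Finset.range m, ((D t).factorial : ℝ)) *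
      (((Finset.univ.filter fun f : Fin n → Fin a =>
          vpat D m f = fun i : Fin n => labelOf D m (n - 1 - (i : ℕ))).card : ℝ) /
        (a : ℝ) ^ n)) :
    ((Finset.univ.filter fun f : Fin n → Fin a =>
        vpat D m f = fun i : Fin n => labelOf D m (n - 1 - (i : ℕ))).card =
      ∑ k ∈ Finset.univ.filter fun k : Fin m → Fin a => extSeq k 0 = 0 ∧ StrictMono k,
        seqTerm D m a (extSeq k)) ∧
    SEP = 1 - (n.factorial : ℝ) / (∏ t ∈ Finset.range m, ((D t).factorial : ℝ)) *
      (((∑ k ∈ Finset.univ.filter fun k : Fin m → Fin a => extSeq k 0 = 0 ∧ StrictMono k,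
        seqTerm D m a (extSeq k) : ℕ) : ℝ) / (a : ℝ) ^ n) := by
  have hn' : n = dPrefix D m := hn
  have ha' : 0 < a := ha
  have hcount : ((Finset.univ.filter fun f : Fin n → Fin a =>
      vpat D m f = fun i : Fin n => labelOf D m (n - 1 - (i : ℕ))).card =
    ∑ k ∈ Finset.univ.filter fun k : Fin m → Fin a => extSeq k 0 = 0 ∧ StrictMono k,
      seqTerm D m a (extSeq k)) := by
    have hfe : (Finset.univ.filter fun f : Fin n → Fin a =>
        vpat D m f = fun i : Fin n => labelOf D m (n - 1 - (i : ℕ))) =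
        Finset.univ.filter (fun f : Fin n → Fin a =>
          ∀ i i' : Fin n, grp D m n i < grp D m n i' → f i < f i') := by
      apply Finset.filter_congr
      intro f _
      exact key_iff hm hD hn' f
    rw [hfe]
    rw [Finset.card_eq_sum_card_fiberwise (f := phiMap D m ha')
      (t := Finset.univ.filter fun k : Fin m → Fin a => extSeq k 0 = 0 ∧ StrictMono k)
      (fun ⦃f⦄ hf => by
        simp only [Finset.coe_filter, Finset.mem_coe, Set.mem_setOf_eq, Finset.mem_filter, Finset.mem_univ, true_and] at hf ⊢
        exact phi_mem hm hD hn' ha' hf)]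
    apply Finset.sum_congr rfl
    intro k hk
    simp only [Finset.mem_filter, Finset.mem_univ, true_and] at hk
    obtain ⟨hk0, hkm⟩ := hk
    obtain ⟨r, hr⟩ : ∃ r, r = m - 1 := ⟨m - 1, rfl⟩
    have hkhat_lt : ∀ j, j < m → extSeq k j < a := by
      intro j hj
      simp only [extSeq, dif_pos hj]
      exact (k ⟨j, hj⟩).isLt
    have hkhat_mono : ∀ {j j' : ℕ}, j < j' → j' < m → extSeq k j < extSeq k j' := by
      intro j j' h h'
      simp only [extSeq, dif_pos (h.trans h'), dif_pos h']
      exact hkm (Fin.mk_lt_mk.mpr h)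
    have htop : ∀ j ∈ Finset.range r,
        (⟨(extSeq k (j + 1) - 1) % a, Nat.mod_lt (extSeq k (j + 1) - 1) ha'⟩ : Fin a) ∈
          (Finset.univ.filter fun c : Fin a => extSeq k j ≤ (c : ℕ) ∧
            (c : ℕ) < (if j = m - 1 then a else extSeq k (j + 1))) := by
      subst hr
      intro j hj
      rw [Finset.mem_range] at hj
      have h1 : extSeq k (j + 1) < a := hkhat_lt (j + 1) (by omega)
      have h2 : extSeq k j < extSeq k (j + 1) := hkhat_mono (by omega) (by omega)
      refine Finset.mem_filter.mpr ⟨Finset.mem_univ _, ?_, ?_⟩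
      · show extSeq k j ≤ (extSeq k (j + 1) - 1) % a
        rw [Nat.mod_eq_of_lt (by omega)]
        omega
      · show ((extSeq k (j + 1) - 1) % a) < (if j = m - 1 then a else extSeq k (j + 1))
        rw [if_neg (by omega), Nat.mod_eq_of_lt (by omega)]
        omega
    have hset : (Finset.univ.filter (fun f : Fin n → Fin a =>
          ∀ i i' : Fin n, grp D m n i < grp D m n i' → f i < f i')).filter
          (fun f => phiMap D m ha' f = k) =
        Finset.univ.filter (fun f : Fin n → Fin a =>
          (∀ i, f i ∈ (Finset.univ.filter fun c : Fin a =>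
              extSeq k (grp D m n i) ≤ (c : ℕ) ∧
              (c : ℕ) < (if grp D m n i = m - 1 then a
                else extSeq k (grp D m n i + 1)))) ∧
          ∀ j ∈ Finset.range r, ∃ i, grp D m n i = j ∧
            f i = (⟨(extSeq k (j + 1) - 1) % a, Nat.mod_lt (extSeq k (j + 1) - 1) ha'⟩ : Fin a)) := by
      subst hr
      rw [Finset.filter_filter]
      apply Finset.filter_congr
      intro f _
      rw [fiber_iff hm hD hn' ha' k hk0 hkm f]
      constructor
      · rintro ⟨h1, h2⟩
        constructor
        · intro i
          simp only [Finset.mem_filter, Finset.mem_univ, true_and]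
          exact h1 i
        · intro j hj
          obtain ⟨i, hgi, hfi⟩ := h2 j hj
          refine ⟨i, hgi, ?_⟩
          apply Fin.ext
          show (f i : ℕ) = (extSeq k (j + 1) - 1) % a
          rw [Finset.mem_range] at hj
          rw [Nat.mod_eq_of_lt (by have := hkhat_lt (j + 1) (by omega); omega)]
          exact hfi
      · rintro ⟨h1, h2⟩
        constructor
        · intro i
          have := h1 i
          simp only [Finset.mem_filter, Finset.mem_univ, true_and] at this
          exact this
        · intro j hj
          obtain ⟨i, hgi, hfi⟩ := h2 j hj
          refine ⟨i, hgi, ?_⟩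
          have hv : (f i : ℕ) = (extSeq k (j + 1) - 1) % a := congrArg Fin.val hfi
          rw [Finset.mem_range] at hj
          rw [Nat.mod_eq_of_lt (by have := hkhat_lt (j + 1) (by omega); omega)] at hv
          exact hv
    have hCA : (Finset.univ.filter (fun f : Fin n → Fin a =>
          (∀ i, f i ∈ (Finset.univ.filter fun c : Fin a =>
              extSeq k (grp D m n i) ≤ (c : ℕ) ∧
              (c : ℕ) < (if grp D m n i = m - 1 then a
                else extSeq k (grp D m n i + 1)))) ∧
          ∀ j ∈ Finset.range r, ∃ i, grp D m n i = j ∧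
            f i = (⟨(extSeq k (j + 1) - 1) % a, Nat.mod_lt (extSeq k (j + 1) - 1) ha'⟩ : Fin a))).card =
        (∏ j ∈ Finset.range r,
          ((Finset.univ.filter fun c : Fin a => extSeq k j ≤ (c : ℕ) ∧
              (c : ℕ) < (if j = m - 1 then a else extSeq k (j + 1))).card ^
              (Finset.univ.filter fun i : Fin n => grp D m n i = j).card -
            ((Finset.univ.filter fun c : Fin a => extSeq k j ≤ (c : ℕ) ∧
              (c : ℕ) < (if j = m - 1 then a else extSeq k (j + 1))).card - 1) ^
              (Finset.univ.filter fun i : Fin n => grp D m n i = j).card)) *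
        ∏ i ∈ Finset.univ.filter (fun i : Fin n => grp D m n i ∉ Finset.range r),
          (Finset.univ.filter fun c : Fin a => extSeq k (grp D m n i) ≤ (c : ℕ) ∧
            (c : ℕ) < (if grp D m n i = m - 1 then a
              else extSeq k (grp D m n i + 1))).card :=
      countAttain (grp D m n) (Finset.range r)
        (fun j => Finset.univ.filter fun c : Fin a => extSeq k j ≤ (c : ℕ) ∧
            (c : ℕ) < (if j = m - 1 then a else extSeq k (j + 1)))
        (fun j => (⟨(extSeq k (j + 1) - 1) % a, Nat.mod_lt (extSeq k (j + 1) - 1) ha'⟩ : Fin a)) htop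
    subst hr
    rw [hset, hCA]
    clear hset hCA htop hfe
    have hc2 : ∀ j, j < m - 1 → (Finset.univ.filter fun c : Fin a =>
        extSeq k j ≤ (c : ℕ) ∧
        (c : ℕ) < (if j = m - 1 then a else extSeq k (j + 1))).card =
        extSeq k (j + 1) - extSeq k j := by
      intro j hj
      have hite : (if j = m - 1 then a else extSeq k (j + 1)) = extSeq k (j + 1) :=
        if_neg (by omega)
      rw [hite]
      exact card_filter_val_Ico a _ _ (le_of_lt (hkhat_lt (j + 1) (by omega)))
    have hcm : (Finset.univ.filter fun c : Fin a => extSeq k (m - 1) ≤ (c : ℕ) ∧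
        (c : ℕ) < (if m - 1 = m - 1 then a else extSeq k (m - 1 + 1))).card =
        a - extSeq k (m - 1) := by
      have hite : (if m - 1 = m - 1 then a else extSeq k (m - 1 + 1)) = a := if_pos rfl
      rw [hite]
      exact card_filter_val_Ico a _ _ le_rfl
    unfold seqTerm
    rw [mul_comm]
    congr 1
    · have hfil : (Finset.univ.filter fun i : Fin n =>
          grp D m n i ∉ Finset.range (m - 1)) =
          (Finset.univ.filter fun i : Fin n => grp D m n i = m - 1) := by
        apply Finset.filter_congr
        intro i _
        have := grp_lt hm hn' i
        simp only [Finset.mem_range]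
        omega
      rw [hfil]
      calc ∏ i ∈ Finset.univ.filter (fun i : Fin n => grp D m n i = m - 1),
            (Finset.univ.filter fun c : Fin a => extSeq k (grp D m n i) ≤ (c : ℕ) ∧
              (c : ℕ) < (if grp D m n i = m - 1 then a
                else extSeq k (grp D m n i + 1))).card =
          ∏ _i ∈ Finset.univ.filter (fun i : Fin n => grp D m n i = m - 1),
            (a - extSeq k (m - 1)) := by
            apply Finset.prod_congr rfl
            intro i hi
            have hgi : grp D m n i = m - 1 := (Finset.mem_filter.mp hi).2
            rw [hgi]
            exact hcm
        _ = (a - extSeq k (m - 1)) ^ D (m - 1) := by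
            rw [Finset.prod_const, card_grp_eq hm hD hn' (by omega : m - 1 < m)]
    · apply Finset.prod_congr rfl
      intro j hj
      rw [Finset.mem_range] at hj
      rw [hc2 j hj, card_grp_eq hm hD hn' (by omega : j < m)]
  exact ⟨hcount, by rw [hSEP, hcount]⟩
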